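/- For p ∈ (0,1) and x > 0, the inequality (1 - e^{-β x^p})^{1/p} < (∫₀ˣ e^{-t^p} dt) / Γ(1 + 1/p) holds, where β = [Γ(1 + 1/p)]^{-p}. -/

import Mathlib

open Real Set Filter MeasureTheory intervalIntegral
open scoped Topology

namespace AlzerAux

/-- The Gamma integrand. -/
noncomputable def phi (a t : ℝ) : ℝ := Real.exp (-t) * t ^ (a - 1)

/-- `1 - e^{-cy}`. -/
noncomputable def E (c y : ℝ) : ℝ := 1 - Real.exp (-(c * y))

/-- Lower incomplete gamma as interval integral. -/
noncomputable def FF (a y : ℝ) : ℝ := ∫ t in (0:ℝ)..y, phi a t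

/-- The logarithm of the ratio of derivatives. -/
noncomputable def L (a c y : ℝ) : ℝ :=
  (a - 1) * (Real.log (c * y) - Real.log (E c y)) + (c - 1) * y

noncomputable def L1 (a c y : ℝ) : ℝ :=
  (a - 1) * (y⁻¹ - c * Real.exp (-(c * y)) / E c y) + (c - 1)

noncomputable def L2 (a c y : ℝ) : ℝ :=
  (a - 1) * (c ^ 2 * Real.exp (-(c * y)) / E c y ^ 2 - (y ^ 2)⁻¹)

noncomputable def A (a c y : ℝ) : ℝ :=
  a * E c y ^ (a - 1) * (c * Real.exp (-(c * y)))

noncomputable def hh (a c y : ℝ) : ℝ := FF a y / Real.Gamma a - E c y ^ a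

lemma cont_rpow {r : ℝ} (hr : 0 ≤ r) : Continuous fun t : ℝ => t ^ r := by
  rw [continuous_iff_continuousAt]
  exact fun x => Real.continuousAt_rpow_const x r (Or.inr hr)

lemma phi_cont {a : ℝ} (ha : 1 < a) : Continuous (phi a) := by
  unfold phi
  exact (Real.continuous_exp.comp continuous_neg).mul (cont_rpow (by linarith))

lemma E_pos {c y : ℝ} (hc : 0 < c) (hy : 0 < y) : 0 < E c y := by
  have : Real.exp (-(c * y)) < 1 := by
    rw [Real.exp_lt_one_iff]
    nlinarith
  unfold E; linarith

lemma hasDerivAt_E (c y : ℝ) :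
    HasDerivAt (E c) (c * Real.exp (-(c * y))) y := by
  have h1 : HasDerivAt (fun y : ℝ => -(c * y)) (-c) y := by
    simpa using ((hasDerivAt_id y).const_mul c).fun_neg
  have h2 := h1.exp
  have h3 := h2.const_sub 1
  refine h3.congr_deriv ?_
  ring

lemma hasDerivAt_G {a c : ℝ} (hc : 0 < c) {y : ℝ} (hy : 0 < y) :
    HasDerivAt (fun y => E c y ^ a) (A a c y) y := by
  have hE := E_pos hc hy
  have h1 := (Real.hasDerivAt_rpow_const (x := E c y) (p := a) (Or.inl hE.ne')).comp y
    (hasDerivAt_E c y)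
  exact h1

lemma hasDerivAt_FF {a : ℝ} (ha : 1 < a) (y : ℝ) :
    HasDerivAt (FF a) (phi a y) y := by
  refine intervalIntegral.integral_hasDerivAt_right
    ((phi_cont ha).intervalIntegrable _ _)
    ((phi_cont ha).stronglyMeasurable.stronglyMeasurableAtFilter)
    (phi_cont ha).continuousAt

lemma hasDerivAt_L {a c : ℝ} (hc : 0 < c) {y : ℝ} (hy : 0 < y) :
    HasDerivAt (L a c) (L1 a c y) y := by
  have hE := E_pos hc hy
  have h1 : HasDerivAt (fun y : ℝ => Real.log (c * y)) (y⁻¹) y := by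
    have := ((hasDerivAt_id y).const_mul c).log (by positivity)
    refine this.congr_deriv ?_
    simp only [id, mul_one]
    field_simp
  have h2 : HasDerivAt (fun y => Real.log (E c y)) (c * Real.exp (-(c * y)) / E c y) y :=
    (hasDerivAt_E c y).log hE.ne'
  have h3 : HasDerivAt (fun y : ℝ => (c - 1) * y) (c - 1) y := by
    simpa using (hasDerivAt_id y).const_mul (c - 1)
  have := ((h1.sub h2).const_mul (a - 1)).add h3
  exact this

lemma hasDerivAt_L1 {a c : ℝ} (hc : 0 < c) {y : ℝ} (hy : 0 < y) :
    HasDerivAt (L1 a c) (L2 a c y) y := by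
  have hE := E_pos hc hy
  have q1 : HasDerivAt (fun y : ℝ => y⁻¹) (-(y ^ 2)⁻¹) y := by
    simpa using hasDerivAt_inv hy.ne'
  have hexp : HasDerivAt (fun y : ℝ => Real.exp (-(c * y))) (-c * Real.exp (-(c * y))) y := by
    have h1 : HasDerivAt (fun y : ℝ => -(c * y)) (-c) y := by
      simpa using ((hasDerivAt_id y).const_mul c).fun_neg
    simpa [mul_comm] using h1.exp
  have q2 : HasDerivAt (fun y => c * Real.exp (-(c * y)) / E c y)
      (-(c ^ 2 * Real.exp (-(c * y))) / E c y ^ 2) y := by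
    have := (hexp.const_mul c).div (hasDerivAt_E c y) hE.ne'
    refine this.congr_deriv ?_
    unfold E
    field_simp
    ring
  have := ((q1.sub q2).const_mul (a - 1)).add_const (c - 1)
  refine this.congr_deriv ?_
  unfold L2
  ring

lemma L2_neg {a c : ℝ} (ha : 1 < a) (hc : 0 < c) {y : ℝ} (hy : 0 < y) :
    L2 a c y < 0 := by
  have hE := E_pos hc hy
  set s := c * y with hs
  have hspos : 0 < s := mul_pos hc hy
  -- s < 2 sinh (s/2) = e^{s/2} - e^{-s/2}
  have hsinh : s / 2 < Real.sinh (s / 2) := (Real.self_lt_sinh_iff).2 (by linarith)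
  rw [Real.sinh_eq] at hsinh
  -- multiply by e^{-s/2}
  have hkey : s * Real.exp (-(s / 2)) < 1 - Real.exp (-s) := by
    have h := mul_lt_mul_of_pos_right (by linarith : s < Real.exp (s / 2) - Real.exp (-(s / 2)))
      (Real.exp_pos (-(s / 2)))
    calc s * Real.exp (-(s / 2))
        < (Real.exp (s / 2) - Real.exp (-(s / 2))) * Real.exp (-(s / 2)) := h
      _ = 1 - Real.exp (-s) := by
          rw [sub_mul, ← Real.exp_add, ← Real.exp_add,
            show s / 2 + -(s / 2) = 0 by ring, show -(s / 2) + -(s / 2) = -s by ring,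
            Real.exp_zero]
  have hE' : E c y = 1 - Real.exp (-s) := rfl
  have hsq : s ^ 2 * Real.exp (-s) < E c y ^ 2 := by
    have h0 : 0 < s * Real.exp (-(s / 2)) := by positivity
    have := mul_lt_mul'' hkey hkey h0.le h0.le
    calc s ^ 2 * Real.exp (-s) = (s * Real.exp (-(s / 2))) * (s * Real.exp (-(s / 2))) := by
          rw [show (-s) = -(s / 2) + -(s / 2) by ring, Real.exp_add]; ring
      _ < (1 - Real.exp (-s)) * (1 - Real.exp (-s)) := this
      _ = E c y ^ 2 := by rw [hE']; ring
  have hmain : c ^ 2 * Real.exp (-(c * y)) / E c y ^ 2 < (y ^ 2)⁻¹ := by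
    rw [div_lt_iff₀ (by positivity), ← hs]
    have : (y ^ 2)⁻¹ * E c y ^ 2 = E c y ^ 2 / y ^ 2 := by ring
    rw [this, lt_div_iff₀ (by positivity)]
    calc c ^ 2 * Real.exp (-s) * y ^ 2 = s ^ 2 * Real.exp (-s) := by rw [hs]; ring
      _ < E c y ^ 2 := hsq
  unfold L2
  nlinarith [hmain]

lemma L_concave {a c : ℝ} (ha : 1 < a) (hc : 0 < c) :
    StrictConcaveOn ℝ (Ioi (0:ℝ)) (L a c) := by
  apply strictConcaveOn_of_deriv2_neg (convex_Ioi 0)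
  · exact fun y hy => (hasDerivAt_L hc (mem_Ioi.1 hy)).continuousAt.continuousWithinAt
  · intro y hy
    rw [interior_Ioi] at hy
    have hy' : 0 < y := mem_Ioi.1 hy
    have e1 : deriv (L a c) =ᶠ[𝓝 y] L1 a c := by
      filter_upwards [isOpen_Ioi.mem_nhds hy] with z hz
      exact (hasDerivAt_L hc (mem_Ioi.1 hz)).deriv
    have : deriv^[2] (L a c) y = L2 a c y := by
      simp only [Function.iterate_succ, Function.iterate_zero, Function.comp_apply, id]
      rw [e1.deriv_eq]
      exact (hasDerivAt_L1 hc hy').deriv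
    rw [this]
    exact L2_neg ha hc hy'

lemma L_tendsto {a c : ℝ} (hc : 0 < c) :
    Tendsto (L a c) (𝓝[>] (0:ℝ)) (𝓝 0) := by
  -- ratio limit
  have hk : HasDerivAt (fun s : ℝ => 1 - Real.exp (-s)) 1 0 := by
    have h1 : HasDerivAt (fun s : ℝ => -s) (-1 : ℝ) 0 := by simpa using (hasDerivAt_id (0:ℝ)).fun_neg
    simpa using (h1.exp).const_sub 1
  rw [hasDerivAt_iff_tendsto_slope] at hk
  have hslope : Tendsto (fun s : ℝ => (1 - Real.exp (-s)) / s) (𝓝[≠] 0) (𝓝 1) := by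
    apply hk.congr'
    filter_upwards [self_mem_nhdsWithin] with s hs
    rw [slope_def_field]
    norm_num
  have hmap : Tendsto (fun y : ℝ => c * y) (𝓝[>] (0:ℝ)) (𝓝[≠] (0:ℝ)) := by
    rw [tendsto_nhdsWithin_iff]
    constructor
    · have : Tendsto (fun y : ℝ => c * y) (𝓝 0) (𝓝 (c * 0)) :=
        (continuous_const.mul continuous_id).tendsto 0
      simpa using this.mono_left nhdsWithin_le_nhds
    · filter_upwards [self_mem_nhdsWithin] with y hy
      exact (mul_pos hc (mem_Ioi.1 hy)).ne'
  have hratio : Tendsto (fun y : ℝ => (1 - Real.exp (-(c * y))) / (c * y)) (𝓝[>] (0:ℝ)) (𝓝 1) :=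
    hslope.comp hmap
  have hlog : Tendsto (fun y : ℝ => Real.log ((1 - Real.exp (-(c * y))) / (c * y)))
      (𝓝[>] (0:ℝ)) (𝓝 0) := by
    have := (Real.continuousAt_log one_ne_zero).tendsto.comp hratio
    simpa [Function.comp_def] using this
  have hlin : Tendsto (fun y : ℝ => (c - 1) * y) (𝓝[>] (0:ℝ)) (𝓝 0) := by
    have : Tendsto (fun y : ℝ => (c - 1) * y) (𝓝 0) (𝓝 ((c - 1) * 0)) :=
      (continuous_const.mul continuous_id).tendsto 0
    simpa using this.mono_left nhdsWithin_le_nhds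
  have hcomb : Tendsto (fun y : ℝ => (a - 1) *
      (-(Real.log ((1 - Real.exp (-(c * y))) / (c * y)))) + (c - 1) * y)
      (𝓝[>] (0:ℝ)) (𝓝 0) := by
    have h1 := (hlog.neg.const_mul (a - 1)).add hlin
    simpa using h1
  apply hcomb.congr'
  filter_upwards [self_mem_nhdsWithin] with y hy
  have hy' : 0 < y := mem_Ioi.1 hy
  have h1 : (0:ℝ) < c * y := mul_pos hc hy'
  have h2 : 0 < E c y := E_pos hc hy'
  have h2' : (1 - Real.exp (-(c * y))) ≠ 0 := by
    have := h2; unfold E at this; exact this.ne'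
  unfold L E
  rw [Real.log_div h2' h1.ne']
  ring

lemma claim1 {a c : ℝ} (ha : 1 < a) (hc : 0 < c) {ε t : ℝ} (hε : 0 < ε) (ht : ε < t) :
    ε / t * L a c t ≤ L a c ε := by
  have ht0 : 0 < t := hε.trans ht
  have conc := (L_concave ha hc).concaveOn
  have hev : ∀ᶠ δ in 𝓝[>] (0:ℝ),
      (t - ε) / (t - δ) * L a c δ + (ε - δ) / (t - δ) * L a c t ≤ L a c ε := by
    filter_upwards [Ioo_mem_nhdsGT_of_mem (show (0:ℝ) ∈ Ico (0:ℝ) ε from ⟨le_refl _, hε⟩)]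
      with δ hδ
    obtain ⟨hδ0, hδε⟩ := hδ
    have htδ : 0 < t - δ := by linarith
    have h1 : (0:ℝ) ≤ (t - ε) / (t - δ) := div_nonneg (by linarith) htδ.le
    have h2 : (0:ℝ) ≤ (ε - δ) / (t - δ) := div_nonneg (by linarith) htδ.le
    have h3 : (t - ε) / (t - δ) + (ε - δ) / (t - δ) = 1 := by
      rw [← add_div, div_eq_one_iff_eq htδ.ne']
      ring
    have hcomb : (t - ε) / (t - δ) * δ + (ε - δ) / (t - δ) * t = ε := by
      field_simp
      ring
    have := conc.2 (mem_Ioi.2 hδ0) (mem_Ioi.2 ht0) h1 h2 h3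
    simp only [smul_eq_mul] at this
    rwa [hcomb] at this
  have htc : Tendsto (fun δ : ℝ => (t - ε) / (t - δ) * L a c δ + (ε - δ) / (t - δ) * L a c t)
      (𝓝[>] (0:ℝ)) (𝓝 (ε / t * L a c t)) := by
    have hA : Tendsto (fun δ : ℝ => (t - ε) / (t - δ)) (𝓝[>] (0:ℝ)) (𝓝 ((t - ε) / t)) := by
      have : ContinuousAt (fun δ : ℝ => (t - ε) / (t - δ)) 0 := by
        apply ContinuousAt.div
        · exact continuousAt_const
        · exact continuousAt_const.sub continuousAt_id
        · simpa using ht0.ne'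
      simpa using this.tendsto.mono_left nhdsWithin_le_nhds
    have hB : Tendsto (fun δ : ℝ => (ε - δ) / (t - δ)) (𝓝[>] (0:ℝ)) (𝓝 (ε / t)) := by
      have : ContinuousAt (fun δ : ℝ => (ε - δ) / (t - δ)) 0 := by
        apply ContinuousAt.div
        · exact continuousAt_const.sub continuousAt_id
        · exact continuousAt_const.sub continuousAt_id
        · simpa using ht0.ne'
      simpa using this.tendsto.mono_left nhdsWithin_le_nhds
    have := (hA.mul (L_tendsto (a:=a) hc)).add (hB.mul (tendsto_const_nhds (x := L a c t)))
    simpa using this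
  exact le_of_tendsto htc hev

lemma ident {a c : ℝ} (ha : 1 < a) (hc : 0 < c)
    (hca : c ^ a * Real.Gamma (a + 1) = 1) {y : ℝ} (hy : 0 < y) :
    A a c y * Real.exp (L a c y) = phi a y / Real.Gamma a := by
  have ha0 : (0:ℝ) < a := by linarith
  have hG : 0 < Real.Gamma a := Real.Gamma_pos_of_pos ha0
  have hE := E_pos hc hy
  have hcy : (0:ℝ) < c * y := mul_pos hc hy
  have h1 : Real.exp (L a c y) =
      (c * y) ^ (a - 1) * ((E c y ^ (a - 1))⁻¹ * Real.exp ((c - 1) * y)) := by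
    have e1 : L a c y =
        Real.log (c * y) * (a - 1) + (Real.log (E c y) * (-(a - 1)) + (c - 1) * y) := by
      unfold L; ring
    rw [e1, Real.exp_add, Real.exp_add, ← Real.rpow_def_of_pos hcy, ← Real.rpow_def_of_pos hE,
      Real.rpow_neg hE.le]
  have h2 : (c * y) ^ (a - 1) = c ^ (a - 1) * y ^ (a - 1) := Real.mul_rpow hc.le hy.le
  have h3 : Real.exp (-(c * y)) * Real.exp ((c - 1) * y) = Real.exp (-y) := by
    rw [← Real.exp_add]; congr 1; ring
  have h4 : c ^ a = c * c ^ (a - 1) := by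
    nth_rewrite 1 [show a = 1 + (a - 1) by ring]
    rw [Real.rpow_add hc, Real.rpow_one]
  have h5 : a * c ^ a * Real.Gamma a = 1 := by
    rw [Real.Gamma_add_one ha0.ne'] at hca
    nlinarith [hca]
  have hEne : E c y ^ (a - 1) ≠ 0 := (Real.rpow_pos_of_pos hE _).ne'
  calc A a c y * Real.exp (L a c y)
      = (a * (c * c ^ (a - 1))) * (y ^ (a - 1) * (Real.exp (-(c * y)) * Real.exp ((c - 1) * y)))
        * (E c y ^ (a - 1) * (E c y ^ (a - 1))⁻¹) := by rw [h1, h2]; unfold A; ring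
    _ = (a * c ^ a) * (y ^ (a - 1) * Real.exp (-y)) * 1 := by
        rw [← h4, h3, mul_inv_cancel₀ hEne]
    _ = phi a y / Real.Gamma a := by
        unfold phi
        rw [mul_one, eq_div_iff hG.ne']
        linear_combination (y ^ (a - 1) * Real.exp (-y)) * h5

lemma hasDerivAt_hh {a c : ℝ} (ha : 1 < a) (hc : 0 < c)
    (hca : c ^ a * Real.Gamma (a + 1) = 1) {y : ℝ} (hy : 0 < y) :
    HasDerivAt (hh a c) (A a c y * (Real.exp (L a c y) - 1)) y := by
  have h := ((hasDerivAt_FF ha y).div_const (Real.Gamma a)).sub (hasDerivAt_G (a := a) hc hy)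
  have e : phi a y / Real.Gamma a - A a c y = A a c y * (Real.exp (L a c y) - 1) := by
    rw [← ident ha hc hca hy]; ring
  rw [← e]
  exact h

lemma cont_hh {a c : ℝ} (ha : 1 < a) : Continuous (hh a c) := by
  unfold hh FF E
  apply Continuous.sub
  · exact (intervalIntegral.continuous_primitive
      (fun u v => (phi_cont ha).intervalIntegrable u v) 0).div_const _
  · apply Continuous.rpow_const
    · exact continuous_const.sub (Real.continuous_exp.comp (continuous_const.mul continuous_id).neg)
    · intro y; exact Or.inr (by linarith)

lemma key {a c : ℝ} (ha : 1 < a) (hc : 0 < c)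
    (hca : c ^ a * Real.Gamma (a + 1) = 1) {y : ℝ} (hy : 0 < y) :
    E c y ^ a < FF a y / Real.Gamma a := by
  have ha0 : (0:ℝ) < a := by linarith
  have hG : 0 < Real.Gamma a := Real.Gamma_pos_of_pos ha0
  have hh0 : hh a c 0 = 0 := by
    unfold hh FF E
    simp [Real.zero_rpow ha0.ne']
  have hgoal : 0 < hh a c y → E c y ^ a < FF a y / Real.Gamma a := by
    intro h; unfold hh at h; linarith
  apply hgoal
  by_cases hL : 0 ≤ L a c y
  · -- h is strictly increasing on [0, y]
    have hLpos : ∀ t ∈ Ioo (0:ℝ) y, 0 < L a c t := by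
      rintro t ⟨ht0, hty⟩
      have hhalf : 0 ≤ L a c (t / 2) := by
        have h1 := claim1 ha hc (by linarith : (0:ℝ) < t / 2) (by linarith : t / 2 < y)
        have hpos : 0 ≤ t / 2 / y * L a c y :=
          mul_nonneg (by positivity) hL
        linarith
      have hd1 : (0:ℝ) < (y - t) / (y - t / 2) := div_pos (by linarith) (by linarith)
      have hd2 : (0:ℝ) < (t - t / 2) / (y - t / 2) := div_pos (by linarith) (by linarith)
      have hsum : (y - t) / (y - t / 2) + (t - t / 2) / (y - t / 2) = 1 := by
        rw [← add_div, div_eq_one_iff_eq (by linarith : y - t / 2 ≠ 0)]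
        ring
      have hcomb := (L_concave ha hc).2 (mem_Ioi.2 (by linarith : (0:ℝ) < t / 2))
        (mem_Ioi.2 (by linarith : (0:ℝ) < y)) (by intro hne; linarith)
        hd1 hd2 hsum
      simp only [smul_eq_mul] at hcomb
      rw [show (y - t) / (y - t / 2) * (t / 2) + (t - t / 2) / (y - t / 2) * y = t by
        rw [div_mul_eq_mul_div, div_mul_eq_mul_div, ← add_div,
          div_eq_iff (by linarith : y - t / 2 ≠ 0)]; ring] at hcomb
      have h1 : 0 ≤ (y - t) / (y - t / 2) * L a c (t / 2) := mul_nonneg hd1.le hhalf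
      have h2 : 0 ≤ (t - t / 2) / (y - t / 2) * L a c y := mul_nonneg hd2.le hL
      linarith
    have hmono : StrictMonoOn (hh a c) (Icc 0 y) := by
      apply strictMonoOn_of_deriv_pos (convex_Icc 0 y) (cont_hh ha).continuousOn
      intro t ht
      rw [interior_Icc] at ht
      rw [(hasDerivAt_hh ha hc hca ht.1).deriv]
      have hE := E_pos hc ht.1
      have hA : 0 < A a c t := by unfold A; positivity
      have hexp : 0 < Real.exp (L a c t) - 1 := by
        have h1 : Real.exp 0 < Real.exp (L a c t) := Real.exp_lt_exp.2 (hLpos t ht)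
        rw [Real.exp_zero] at h1
        linarith
      exact mul_pos hA hexp
    have := hmono (left_mem_Icc.2 hy.le) (right_mem_Icc.2 hy.le) hy
    rwa [hh0] at this
  · -- h is strictly decreasing on [y, ∞)
    push_neg at hL
    have hLneg : ∀ t, y < t → L a c t < 0 := by
      intro t hyt
      have h := claim1 ha hc hy hyt
      by_contra hcon
      push_neg at hcon
      have : 0 ≤ y / t * L a c t := mul_nonneg (div_nonneg hy.le (by linarith)) hcon
      linarith
    have hanti : StrictAntiOn (hh a c) (Ici y) := by
      apply strictAntiOn_of_deriv_neg (convex_Ici y) (cont_hh ha).continuousOn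
      intro t ht
      rw [interior_Ici] at ht
      have hty : y < t := mem_Ioi.1 ht
      rw [(hasDerivAt_hh ha hc hca (hy.trans hty)).deriv]
      have hE := E_pos hc (hy.trans hty)
      have hA : 0 < A a c t := by unfold A; positivity
      have hexp : Real.exp (L a c t) - 1 < 0 := by
        have h1 : Real.exp (L a c t) < Real.exp 0 := Real.exp_lt_exp.2 (hLneg t hty)
        rw [Real.exp_zero] at h1
        linarith
      exact mul_neg_of_pos_of_neg hA hexp
    have htend : Tendsto (hh a c) atTop (𝓝 0) := by
      have hFtend : Tendsto (FF a) atTop (𝓝 (Real.Gamma a)) := by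
        have h := MeasureTheory.intervalIntegral_tendsto_integral_Ioi 0
          (Real.GammaIntegral_convergent ha0) tendsto_id
        rw [← Real.Gamma_eq_integral ha0] at h
        exact h
      have hexp : Tendsto (fun y : ℝ => Real.exp (-(c * y))) atTop (𝓝 0) := by
        have h1 : Tendsto (fun y : ℝ => c * y) atTop atTop :=
          tendsto_id.const_mul_atTop hc
        exact Real.tendsto_exp_neg_atTop_nhds_zero.comp h1
      have hEtend : Tendsto (fun y => E c y ^ a) atTop (𝓝 1) := by
        have h1 : Tendsto (fun y => E c y) atTop (𝓝 1) := by
          have := (tendsto_const_nhds (x := (1:ℝ))).sub hexp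
          simpa [E] using this
        have h2 := (Real.continuousAt_rpow_const 1 a (Or.inl one_ne_zero)).tendsto.comp h1
        simpa [Function.comp_def] using h2
      have h3 := (hFtend.div_const (Real.Gamma a)).sub hEtend
      rw [div_self hG.ne'] at h3
      rw [sub_self] at h3
      exact h3
    have h1 : hh a c (y + 1) < hh a c y :=
      hanti (mem_Ici.2 le_rfl) (mem_Ici.2 (by linarith)) (by linarith)
    have h2 : 0 ≤ hh a c (y + 1) := by
      apply le_of_tendsto htend
      filter_upwards [eventually_ge_atTop (y + 1)] with t htt
      exact hanti.antitoneOn (mem_Ici.2 (by linarith)) (mem_Ici.2 (by linarith)) htt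
    linarith

end AlzerAux

/-- Alzer's inequality: for `p ∈ (0,1)` and `x > 0`,
`(1 - e^{-β x^p})^{1/p} < (∫₀ˣ e^{-t^p} dt) / Γ(1 + 1/p)` where `β = Γ(1 + 1/p)^{-p}`. -/
theorem alzer_inequality (p x : ℝ) (hp : 0 < p) (hp1 : p < 1) (hx : 0 < x) :
    (1 - Real.exp (-(Real.Gamma (1 + 1 / p) ^ (-p) * x ^ p))) ^ (1 / p) <
      (∫ t in (0 : ℝ)..x, Real.exp (-(t ^ p))) / Real.Gamma (1 + 1 / p) := by
  have hp' : (1:ℝ) < 1 / p := by rw [lt_div_iff₀ hp]; linarith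
  have ha0 : (0:ℝ) < 1 / p := by positivity
  have hy : 0 < x ^ p := Real.rpow_pos_of_pos hx p
  have hG1 : 0 < Real.Gamma (1 + 1 / p) := Real.Gamma_pos_of_pos (by positivity)
  have hc : 0 < Real.Gamma (1 + 1 / p) ^ (-p) := Real.rpow_pos_of_pos hG1 _
  have hca : (Real.Gamma (1 + 1 / p) ^ (-p)) ^ (1 / p) * Real.Gamma (1 / p + 1) = 1 := by
    have h1 : (Real.Gamma (1 + 1 / p) ^ (-p)) ^ ((1:ℝ) / p) = (Real.Gamma (1 + 1 / p))⁻¹ := by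
      rw [← Real.rpow_mul hG1.le, show -p * (1 / p) = -1 by field_simp]
      exact Real.rpow_neg_one _
    rw [h1, show (1:ℝ) / p + 1 = 1 + 1 / p by ring]
    exact inv_mul_cancel₀ hG1.ne'
  -- substitution t = s^{1/p}
  have hsub : (∫ t in (0:ℝ)..x, Real.exp (-(t ^ p)))
      = (1 / p) * AlzerAux.FF (1 / p) (x ^ p) := by
    have hfd : ∀ s ∈ uIcc (0:ℝ) (x ^ p),
        HasDerivAt (fun s : ℝ => s ^ ((1:ℝ) / p)) (1 / p * s ^ ((1:ℝ) / p - 1)) s :=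
      fun s _ => Real.hasDerivAt_rpow_const (Or.inr hp'.le)
    have hf'c : ContinuousOn (fun s : ℝ => 1 / p * s ^ ((1:ℝ) / p - 1)) (uIcc 0 (x ^ p)) :=
      (continuous_const.mul (AlzerAux.cont_rpow (by linarith))).continuousOn
    have hgc : Continuous fun t : ℝ => Real.exp (-(t ^ p)) :=
      Real.continuous_exp.comp (AlzerAux.cont_rpow hp.le).neg
    have hchg := intervalIntegral.integral_comp_smul_deriv hfd hf'c hgc
    have h0 : (0:ℝ) ^ ((1:ℝ) / p) = 0 := Real.zero_rpow (by positivity)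
    have hxy : (x ^ p) ^ ((1:ℝ) / p) = x := by
      rw [← Real.rpow_mul hx.le, show p * (1 / p) = 1 by field_simp, Real.rpow_one]
    simp only [Function.comp] at hchg
    rw [h0, hxy] at hchg
    rw [← hchg]
    unfold AlzerAux.FF
    rw [← intervalIntegral.integral_const_mul]
    apply intervalIntegral.integral_congr
    intro s hs
    rw [uIcc_of_le hy.le] at hs
    have hs0 : 0 ≤ s := hs.1
    have hss : (s ^ ((1:ℝ) / p)) ^ p = s := by
      rw [← Real.rpow_mul hs0, show (1 / p) * p = 1 by field_simp, Real.rpow_one]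
    show (1 / p * s ^ ((1:ℝ) / p - 1)) • Real.exp (-(s ^ ((1:ℝ) / p)) ^ p)
      = 1 / p * AlzerAux.phi (1 / p) s
    rw [hss, smul_eq_mul]
    unfold AlzerAux.phi
    ring
  have hGa : Real.Gamma (1 + 1 / p) = (1 / p) * Real.Gamma (1 / p) := by
    rw [show (1:ℝ) + 1 / p = 1 / p + 1 by ring]
    exact Real.Gamma_add_one ha0.ne'
  have hkey := AlzerAux.key hp' hc hca hy
  have hEeq : AlzerAux.E (Real.Gamma (1 + 1 / p) ^ (-p)) (x ^ p)
      = 1 - Real.exp (-(Real.Gamma (1 + 1 / p) ^ (-p) * x ^ p)) := rfl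
  have hrhs : 1 / p * AlzerAux.FF (1 / p) (x ^ p) / Real.Gamma (1 + 1 / p)
      = AlzerAux.FF (1 / p) (x ^ p) / Real.Gamma (1 / p) := by
    rw [hGa, mul_div_mul_left _ _ (ne_of_gt ha0)]
  rw [← hEeq, hsub, hrhs]
  exact hkey
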